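/- Let L > 0 and suppose the triples (x^i, g^i, f^i) ∈ ℝⁿ × ℝⁿ × ℝ, i ∈ I (I finite), satisfy for all i, j ∈ I: (1/(2L))‖g^i − g^j‖² − (L/4)‖x^i − x^j − (1/L)(g^i − g^j)‖² ≤ f^i − f^j − ⟨g^j, x^i − x^j⟩. Then for the one-dimensional case n = 1 with I = {1, 2}, there exists an L-smooth function f : ℝ → ℝ with f(x^i) = f^i and f′(x^i) = g^i for i = 1, 2. -/

import Mathlib

private lemma lin_int (a b c e : ℝ) :
    ∫ t in a..b, (c + e * t) = c*(b-a) + e*(b^2-a^2)/2 := by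
  have h : ∫ t in a..b, (c + e * t) = (∫ _t in a..b, c) + ∫ t in a..b, e * t :=
    intervalIntegral.integral_add intervalIntegrable_const
      (Continuous.intervalIntegrable (by fun_prop) a b)
  rw [h, intervalIntegral.integral_const, intervalIntegral.integral_const_mul, integral_id]
  simp only [smul_eq_mul]; ring

set_option maxHeartbeats 1000000 in
private lemma aux14 (L : ℝ) (hL : 0 < L) (x1 x2 g1 g2 f1 f2 : ℝ) (hx : x1 < x2)
    (h21 : 1/(2*L)*(g2-g1)^2 - L/4*(x2-x1-1/L*(g2-g1))^2 ≤ f2 - f1 - g1*(x2-x1))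
    (h12 : 1/(2*L)*(g1-g2)^2 - L/4*(x1-x2-1/L*(g1-g2))^2 ≤ f1 - f2 - g2*(x1-x2)) :
    ∃ f : ℝ → ℝ, Differentiable ℝ f ∧ (∀ a b, |deriv f a - deriv f b| ≤ L*|a-b|) ∧
      f x1 = f1 ∧ deriv f x1 = g1 ∧ f x2 = f2 ∧ deriv f x2 = g2 := by
  have hL0 : L ≠ 0 := ne_of_gt hL
  have hh : 0 < x2 - x1 := sub_pos.mpr hx
  -- polynomial forms of the hypotheses
  have h21' : (g2-g1)^2 + 2*L*(g2-g1)*(x2-x1) - L^2*(x2-x1)^2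
      ≤ 4*L*(f2-f1) - 4*L*g1*(x2-x1) := by
    have h4 : (0:ℝ) ≤ 4*L := by positivity
    have := mul_le_mul_of_nonneg_left h21 h4
    have key : 4*L*(1/(2*L)*(g2-g1)^2 - L/4*(x2-x1-1/L*(g2-g1))^2)
        = (g2-g1)^2 + 2*L*(g2-g1)*(x2-x1) - L^2*(x2-x1)^2 := by
      field_simp; ring
    linarith [this, key]
  have h12' : (g2-g1)^2 + 2*L*(g2-g1)*(x2-x1) - L^2*(x2-x1)^2
      ≤ 4*L*(f1-f2) + 4*L*g2*(x2-x1) := by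
    have h4 : (0:ℝ) ≤ 4*L := by positivity
    have := mul_le_mul_of_nonneg_left h12 h4
    have key : 4*L*(1/(2*L)*(g1-g2)^2 - L/4*(x1-x2-1/L*(g1-g2))^2)
        = (g2-g1)^2 + 2*L*(g2-g1)*(x2-x1) - L^2*(x2-x1)^2 := by
      field_simp; ring
    linarith [this, key]
  have hd2 : (g2-g1)^2 ≤ L^2*(x2-x1)^2 := by linarith [h21', h12']
  have habs : |g2 - g1| ≤ L * (x2 - x1) := by
    rw [abs_le]
    constructor
    · nlinarith [mul_pos hL hh]
    · nlinarith [mul_pos hL hh]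
  -- m, M and lambda
  set m : ℝ := (g1+g2)*(x2-x1)/2 - L*(x2-x1)^2/4 + (g2-g1)^2/(4*L) with hmdef
  set M : ℝ := (g1+g2)*(x2-x1)/2 + L*(x2-x1)^2/4 - (g2-g1)^2/(4*L) with hMdef
  have hme : 4*L*m = 2*L*(g1+g2)*(x2-x1) - L^2*(x2-x1)^2 + (g2-g1)^2 := by
    rw [hmdef]; field_simp; ring
  have hMe : 4*L*M = 2*L*(g1+g2)*(x2-x1) + L^2*(x2-x1)^2 - (g2-g1)^2 := by
    rw [hMdef]; field_simp; ring
  have hm : m ≤ f2 - f1 := by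
    have h4 : 4*L*m ≤ 4*L*(f2-f1) := by linarith
    exact le_of_mul_le_mul_left h4 (by positivity)
  have hM : f2 - f1 ≤ M := by
    have h4 : 4*L*(f2-f1) ≤ 4*L*M := by linarith
    exact le_of_mul_le_mul_left h4 (by positivity)
  set lam : ℝ := ((f2-f1) - m)/(M - m) with hlamdef
  have hlam0 : 0 ≤ lam := div_nonneg (by linarith) (by linarith)
  have hlam1 : lam ≤ 1 := by
    rcases eq_or_lt_of_le (hm.trans hM) with h | h
    · rw [hlamdef, ← h]; simp
    · rw [hlamdef]; exact div_le_one_of_le₀ (by linarith) (by linarith)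
  have hlamS : lam * (M - m) = (f2-f1) - m := by
    rcases eq_or_lt_of_le (hm.trans hM) with h | h
    · rw [← h]; simp; linarith
    · rw [hlamdef]; exact div_mul_cancel₀ _ (ne_of_gt (sub_pos.mpr h))
  -- the derivative function
  set u : ℝ → ℝ := fun t => min (g1 + L*|t - x1|) (g2 + L*|t - x2|) with hudef
  set lo : ℝ → ℝ := fun t => max (g1 - L*|t - x1|) (g2 - L*|t - x2|) with hlodef
  set φ : ℝ → ℝ := fun t => lam * u t + (1-lam) * lo t with hφdef
  have hcu : Continuous u := by
    apply Continuous.min <;> fun_prop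
  have hclo : Continuous lo := by
    apply Continuous.max <;> fun_prop
  have hcont : Continuous φ := by fun_prop
  -- Lipschitz bound
  have base : ∀ a b c : ℝ, |(L*|a - c|) - (L*|b - c|)| ≤ L * |a - b| := by
    intro a b c
    rw [← mul_sub, abs_mul, abs_of_pos hL]
    refine mul_le_mul_of_nonneg_left ?_ hL.le
    calc |(|a-c| - |b-c|)| ≤ |(a-c) - (b-c)| := abs_abs_sub_abs_le_abs_sub _ _
    _ = |a - b| := by ring_nf
  have hulip : ∀ a b, |u a - u b| ≤ L * |a - b| := by
    intro a b
    refine (abs_min_sub_min_le_max _ _ _ _).trans (max_le ?_ ?_)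
    · have h := base a b x1
      calc |(g1 + L*|a-x1|) - (g1 + L*|b-x1|)| = |(L*|a-x1|) - (L*|b-x1|)| := by
            congr 1; ring
      _ ≤ L * |a - b| := h
    · have h := base a b x2
      calc |(g2 + L*|a-x2|) - (g2 + L*|b-x2|)| = |(L*|a-x2|) - (L*|b-x2|)| := by
            congr 1; ring
      _ ≤ L * |a - b| := h
  have hlolip : ∀ a b, |lo a - lo b| ≤ L * |a - b| := by
    intro a b
    refine (abs_max_sub_max_le_max _ _ _ _).trans (max_le ?_ ?_)
    · have h := base a b x1
      calc |(g1 - L*|a-x1|) - (g1 - L*|b-x1|)| = |(L*|b-x1|) - (L*|a-x1|)| := by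
            congr 1; ring
      _ = |(L*|a-x1|) - (L*|b-x1|)| := abs_sub_comm _ _
      _ ≤ L * |a - b| := h
    · have h := base a b x2
      calc |(g2 - L*|a-x2|) - (g2 - L*|b-x2|)| = |(L*|b-x2|) - (L*|a-x2|)| := by
            congr 1; ring
      _ = |(L*|a-x2|) - (L*|b-x2|)| := abs_sub_comm _ _
      _ ≤ L * |a - b| := h
  have hlip : ∀ a b, |φ a - φ b| ≤ L * |a - b| := by
    intro a b
    have hstep : φ a - φ b = lam * (u a - u b) + (1-lam) * (lo a - lo b) := by
      simp only [hφdef]; ring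
    calc |φ a - φ b| = |lam * (u a - u b) + (1-lam) * (lo a - lo b)| := by rw [hstep]
    _ ≤ |lam * (u a - u b)| + |(1-lam) * (lo a - lo b)| := abs_add_le _ _
    _ = lam * |u a - u b| + (1-lam) * |lo a - lo b| := by
        rw [abs_mul, abs_mul, abs_of_nonneg hlam0,
          abs_of_nonneg (show (0:ℝ) ≤ 1 - lam by linarith)]
    _ ≤ lam * (L * |a - b|) + (1-lam) * (L * |a - b|) := by
        exact add_le_add (mul_le_mul_of_nonneg_left (hulip a b) hlam0)
          (mul_le_mul_of_nonneg_left (hlolip a b) (by linarith))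
    _ = L * |a - b| := by ring
  -- endpoint values
  have habs12 : |x1 - x2| = x2 - x1 := by
    rw [abs_of_nonpos (by linarith)]; ring
  have habs21 : |x2 - x1| = x2 - x1 := abs_of_nonneg (by linarith)
  have hdle : g2 - g1 ≤ L*(x2-x1) := le_trans (le_abs_self _) habs
  have hdge : -(L*(x2-x1)) ≤ g2 - g1 := neg_le_of_abs_le habs
  have hφx1 : φ x1 = g1 := by
    have hu1 : u x1 = g1 := by
      simp only [hudef, sub_self, abs_zero, mul_zero, add_zero, habs12]
      exact min_eq_left (by linarith)
    have hl1 : lo x1 = g1 := by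
      simp only [hlodef, sub_self, abs_zero, mul_zero, sub_zero, habs12]
      exact max_eq_left (by linarith)
    simp only [hφdef, hu1, hl1]; ring
  have hφx2 : φ x2 = g2 := by
    have hu2 : u x2 = g2 := by
      simp only [hudef, sub_self, abs_zero, mul_zero, add_zero, habs21]
      exact min_eq_right (by linarith)
    have hl2 : lo x2 = g2 := by
      simp only [hlodef, sub_self, abs_zero, mul_zero, sub_zero, habs21]
      exact max_eq_right (by linarith)
    simp only [hφdef, hu2, hl2]; ring
  -- split points
  set ts : ℝ := (x1+x2)/2 + (g2-g1)/(2*L) with htsdef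
  set ss : ℝ := (x1+x2)/2 - (g2-g1)/(2*L) with hssdef
  have hts2L : 2*L*ts = L*(x1+x2) + (g2-g1) := by rw [htsdef]; field_simp
  have hss2L : 2*L*ss = L*(x1+x2) - (g2-g1) := by rw [hssdef]; field_simp
  have hts1 : x1 ≤ ts := by
    have : 2*L*x1 ≤ 2*L*ts := by rw [hts2L]; linarith [hdge]
    exact le_of_mul_le_mul_left this (by positivity)
  have hts2 : ts ≤ x2 := by
    have : 2*L*ts ≤ 2*L*x2 := by rw [hts2L]; linarith [hdle]
    exact le_of_mul_le_mul_left this (by positivity)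
  have hss1 : x1 ≤ ss := by
    have : 2*L*x1 ≤ 2*L*ss := by rw [hss2L]; linarith [hdle]
    exact le_of_mul_le_mul_left this (by positivity)
  have hss2 : ss ≤ x2 := by
    have : 2*L*ss ≤ 2*L*x2 := by rw [hss2L]; linarith [hdge]
    exact le_of_mul_le_mul_left this (by positivity)
  -- integral of u
  have hIu : ∫ t in x1..x2, u t = M := by
    have step1 : ∫ t in x1..x2, u t
        = ∫ t in x1..x2, min ((g1 - L*x1) + L*t) ((g2 + L*x2) + (-L)*t) := by
      apply intervalIntegral.integral_congr
      intro t ht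
      rw [Set.uIcc_of_le hx.le] at ht
      have e1 : |t - x1| = t - x1 := abs_of_nonneg (by linarith [ht.1])
      have e2 : |t - x2| = x2 - t := by rw [abs_of_nonpos (by linarith [ht.2])]; ring
      simp only [hudef, e1, e2]
      congr 1 <;> ring
    rw [step1]
    have hsplit : (∫ t in x1..ts, min ((g1 - L*x1) + L*t) ((g2 + L*x2) + (-L)*t))
        + ∫ t in ts..x2, min ((g1 - L*x1) + L*t) ((g2 + L*x2) + (-L)*t)
        = ∫ t in x1..x2, min ((g1 - L*x1) + L*t) ((g2 + L*x2) + (-L)*t) :=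
      intervalIntegral.integral_add_adjacent_intervals
        (Continuous.intervalIntegrable (by fun_prop) _ _)
        (Continuous.intervalIntegrable (by fun_prop) _ _)
    rw [← hsplit]
    have I1 : ∫ t in x1..ts, min ((g1 - L*x1) + L*t) ((g2 + L*x2) + (-L)*t)
        = ∫ t in x1..ts, ((g1 - L*x1) + L*t) := by
      apply intervalIntegral.integral_congr
      intro t ht
      rw [Set.uIcc_of_le hts1] at ht
      apply min_eq_left
      have h2 : 2*L*t ≤ 2*L*ts := by
        apply mul_le_mul_of_nonneg_left ht.2 (by positivity)
      rw [hts2L] at h2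
      linarith
    have I2 : ∫ t in ts..x2, min ((g1 - L*x1) + L*t) ((g2 + L*x2) + (-L)*t)
        = ∫ t in ts..x2, ((g2 + L*x2) + (-L)*t) := by
      apply intervalIntegral.integral_congr
      intro t ht
      rw [Set.uIcc_of_le hts2] at ht
      apply min_eq_right
      have h2 : 2*L*ts ≤ 2*L*t := by
        apply mul_le_mul_of_nonneg_left ht.1 (by positivity)
      rw [hts2L] at h2
      linarith
    rw [I1, I2, lin_int, lin_int, hMdef, htsdef]
    field_simp
    ring
  -- integral of lo
  have hIl : ∫ t in x1..x2, lo t = m := by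
    have step1 : ∫ t in x1..x2, lo t
        = ∫ t in x1..x2, max ((g1 + L*x1) + (-L)*t) ((g2 - L*x2) + L*t) := by
      apply intervalIntegral.integral_congr
      intro t ht
      rw [Set.uIcc_of_le hx.le] at ht
      have e1 : |t - x1| = t - x1 := abs_of_nonneg (by linarith [ht.1])
      have e2 : |t - x2| = x2 - t := by rw [abs_of_nonpos (by linarith [ht.2])]; ring
      simp only [hlodef, e1, e2]
      congr 1 <;> ring
    rw [step1]
    have hsplit : (∫ t in x1..ss, max ((g1 + L*x1) + (-L)*t) ((g2 - L*x2) + L*t))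
        + ∫ t in ss..x2, max ((g1 + L*x1) + (-L)*t) ((g2 - L*x2) + L*t)
        = ∫ t in x1..x2, max ((g1 + L*x1) + (-L)*t) ((g2 - L*x2) + L*t) :=
      intervalIntegral.integral_add_adjacent_intervals
        (Continuous.intervalIntegrable (by fun_prop) _ _)
        (Continuous.intervalIntegrable (by fun_prop) _ _)
    rw [← hsplit]
    have I1 : ∫ t in x1..ss, max ((g1 + L*x1) + (-L)*t) ((g2 - L*x2) + L*t)
        = ∫ t in x1..ss, ((g1 + L*x1) + (-L)*t) := by
      apply intervalIntegral.integral_congr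
      intro t ht
      rw [Set.uIcc_of_le hss1] at ht
      apply max_eq_left
      have h2 : 2*L*t ≤ 2*L*ss := by
        apply mul_le_mul_of_nonneg_left ht.2 (by positivity)
      rw [hss2L] at h2
      linarith
    have I2 : ∫ t in ss..x2, max ((g1 + L*x1) + (-L)*t) ((g2 - L*x2) + L*t)
        = ∫ t in ss..x2, ((g2 - L*x2) + L*t) := by
      apply intervalIntegral.integral_congr
      intro t ht
      rw [Set.uIcc_of_le hss2] at ht
      apply max_eq_right
      have h2 : 2*L*ss ≤ 2*L*t := by
        apply mul_le_mul_of_nonneg_left ht.1 (by positivity)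
      rw [hss2L] at h2
      linarith
    rw [I1, I2, lin_int, lin_int, hmdef, hssdef]
    field_simp
    ring
  -- integral of φ
  have hIφ : ∫ t in x1..x2, φ t = f2 - f1 := by
    have step : ∫ t in x1..x2, φ t
        = lam * (∫ t in x1..x2, u t) + (1-lam) * ∫ t in x1..x2, lo t := by
      rw [← intervalIntegral.integral_const_mul, ← intervalIntegral.integral_const_mul]
      rw [← intervalIntegral.integral_add
        (Continuous.intervalIntegrable (by fun_prop) _ _)
        (Continuous.intervalIntegrable (by fun_prop) _ _)]
    rw [step, hIu, hIl]
    linear_combination hlamS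
  -- the function
  set f : ℝ → ℝ := fun t => f1 + ∫ s in x1..t, φ s with hfdef
  have hder : ∀ t, HasDerivAt f (φ t) t := by
    intro t
    have h1 : HasDerivAt (fun v => ∫ s in x1..v, φ s) (φ t) t :=
      intervalIntegral.integral_hasDerivAt_right (hcont.intervalIntegrable _ _)
        (hcont.stronglyMeasurableAtFilter _ _) hcont.continuousAt
    simpa [hfdef] using h1.const_add f1
  refine ⟨f, fun t => (hder t).differentiableAt, fun a b => ?_, ?_, ?_, ?_, ?_⟩
  · rw [(hder a).deriv, (hder b).deriv]; exact hlip a b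
  · simp [hfdef]
  · rw [(hder x1).deriv]; exact hφx1
  · simp [hfdef, hIφ]
  · rw [(hder x2).deriv]; exact hφx2

theorem stmt_14 (L : ℝ) (hL : 0 < L) (x g fv : Fin 2 → ℝ)
    (hinterp : ∀ i j, 1 / (2 * L) * (g i - g j) ^ 2
        - L / 4 * (x i - x j - 1 / L * (g i - g j)) ^ 2 ≤
      fv i - fv j - g j * (x i - x j)) :
    ∃ f : ℝ → ℝ, Differentiable ℝ f ∧
      (∀ a b, |deriv f a - deriv f b| ≤ L * |a - b|) ∧
      ∀ i, f (x i) = fv i ∧ deriv f (x i) = g i := by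
  rcases lt_trichotomy (x 0) (x 1) with hlt | heq | hgt
  · obtain ⟨f, hdiff, hlipf, h1, h2, h3, h4⟩ :=
      aux14 L hL (x 0) (x 1) (g 0) (g 1) (fv 0) (fv 1) hlt (hinterp 1 0) (hinterp 0 1)
    refine ⟨f, hdiff, hlipf, ?_⟩
    intro i; fin_cases i
    · exact ⟨h1, h2⟩
    · exact ⟨h3, h4⟩
  · -- degenerate case x 0 = x 1
    have e1 := hinterp 0 1
    have e2 := hinterp 1 0
    have hx0 : x 0 - x 1 = 0 := by rw [heq]; ring
    have hx0' : x 1 - x 0 = 0 := by rw [heq]; ring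
    rw [hx0] at e1
    rw [hx0'] at e2
    have key : ∀ d : ℝ, 4*L*(1/(2*L)*d^2 - L/4*(0 - 1/L*d)^2) = d^2 := by
      intro d; field_simp; ring
    have e1' : (g 0 - g 1)^2 ≤ 4*L*(fv 0 - fv 1) := by
      have := mul_le_mul_of_nonneg_left e1 (by positivity : (0:ℝ) ≤ 4*L)
      have k := key (g 0 - g 1)
      nlinarith [this]
    have e2' : (g 1 - g 0)^2 ≤ 4*L*(fv 1 - fv 0) := by
      have := mul_le_mul_of_nonneg_left e2 (by positivity : (0:ℝ) ≤ 4*L)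
      have k := key (g 1 - g 0)
      nlinarith [this]
    have hgeq : g 0 = g 1 := by nlinarith [sq_nonneg (g 0 - g 1), sq_nonneg (g 1 - g 0)]
    have hfeq : fv 0 = fv 1 := by nlinarith [sq_nonneg (g 0 - g 1)]
    set f : ℝ → ℝ := fun t => fv 0 + g 0 * (t - x 0) with hfdef
    have hder : ∀ t, HasDerivAt f (g 0) t := by
      intro t
      have := (((hasDerivAt_id t).sub_const (x 0)).const_mul (g 0)).const_add (fv 0)
      simpa [hfdef] using this
    refine ⟨f, fun t => (hder t).differentiableAt, fun a b => ?_, ?_⟩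
    · rw [(hder a).deriv, (hder b).deriv]
      simp only [sub_self, abs_zero]
      positivity
    · have p1 : f (x 1) = fv 1 := by
        show fv 0 + g 0 * (x 1 - x 0) = fv 1
        rw [hx0', hfeq]; ring
      have p0 : f (x 0) = fv 0 := by
        show fv 0 + g 0 * (x 0 - x 0) = fv 0
        ring
      have q1 : deriv f (x 1) = g 1 := by rw [(hder (x 1)).deriv]; exact hgeq
      intro i; fin_cases i
      · exact ⟨p0, (hder (x 0)).deriv⟩
      · exact ⟨p1, q1⟩
  · obtain ⟨f, hdiff, hlipf, h1, h2, h3, h4⟩ :=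
      aux14 L hL (x 1) (x 0) (g 1) (g 0) (fv 1) (fv 0) hgt (hinterp 0 1) (hinterp 1 0)
    refine ⟨f, hdiff, hlipf, ?_⟩
    intro i; fin_cases i
    · exact ⟨h3, h4⟩
    · exact ⟨h1, h2⟩
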